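/- Over a field of characteristic 2, in a connected, commutative, cocommutative graded Hopf algebra, every primitive element of odd degree is indecomposable. -/

import Mathlib

/-!
Over a field of characteristic 2, in a connected, commutative, cocommutative graded Hopf
algebra, every (non-zero) primitive element of odd degree is indecomposable.

The graded Hopf algebra is rendered as a graded commutative algebra `A` (grading `𝒜`) with
comultiplication `Δ`, counit `ε`, connected (𝒜 0 = k·1) and cocommutative.  An element `x`
is primitive if Δ x = x ⊗ 1 + 1 ⊗ x, and decomposable if it lies in `Aplus * Aplus` where
`Aplus = ⨆_{i>0} 𝒜 i` is the augmentation ideal.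
-/

open TensorProduct

set_option linter.unusedSectionVars false
set_option linter.unusedVariables false
set_option maxHeartbeats 1000000

namespace OddPrimAux

lemma addself (k : Type*) [Field k] [CharP k 2] {A : Type*} [CommRing A] [Algebra k A]
    (z : A) : z + z = 0 := by
  rw [← two_smul k z, show (2 : k) = 0 by exact_mod_cast CharP.cast_eq_zero k 2, zero_smul]

lemma eq_of_add_eq_zero'' (k : Type*) [Field k] [CharP k 2] {A : Type*} [CommRing A]
    [Algebra k A] {u v : A} (h : u + v = 0) : u = v := by
  have h2 := addself k v
  linear_combination h - h2

lemma twoA_eq_zero (k : Type*) [Field k] [CharP k 2] {A : Type*} [CommRing A] [Algebra k A] :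
    (2 : A) = 0 := by
  have := addself k (1 : A); rwa [one_add_one_eq_two] at this

section Graded

variable {k : Type*} [Field k] [CharP k 2] {A : Type*} [CommRing A] [Algebra k A]
variable (𝒜 : ℕ → Submodule k A) [GradedAlgebra 𝒜]

/-- Projection onto the sum of the homogeneous components of degrees satisfying `P`. -/
noncomputable def gp (P : ℕ → Prop) [DecidablePred P] : A →ₗ[k] A :=
  (DirectSum.toModule k ℕ A fun i => if P i then (𝒜 i).subtype else (0 : 𝒜 i →ₗ[k] A)).comp
    (DirectSum.decomposeLinearEquiv 𝒜).toLinearMap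

omit [CharP k 2] in
lemma gp_apply_of_mem {P : ℕ → Prop} [DecidablePred P] {i : ℕ} {a : A} (ha : a ∈ 𝒜 i) :
    gp 𝒜 P a = if P i then a else 0 := by
  have hdec : (DirectSum.decompose 𝒜 a : DirectSum ℕ fun i => 𝒜 i)
      = DirectSum.lof k ℕ (fun i => 𝒜 i) i ⟨a, ha⟩ := by
    rw [DirectSum.decompose_of_mem 𝒜 ha, DirectSum.lof_eq_of]
  simp only [gp, LinearMap.comp_apply, LinearEquiv.coe_coe,
    DirectSum.decomposeLinearEquiv_apply, hdec, DirectSum.toModule_lof]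
  split_ifs <;> simp

omit [CharP k 2] in
lemma gp_mem {P : ℕ → Prop} [DecidablePred P] {i : ℕ} {a : A} (ha : a ∈ 𝒜 i) (h : P i) :
    gp 𝒜 P a = a := by rw [gp_apply_of_mem 𝒜 ha, if_pos h]

omit [CharP k 2] in
lemma gp_not_mem {P : ℕ → Prop} [DecidablePred P] {i : ℕ} {a : A} (ha : a ∈ 𝒜 i) (h : ¬ P i) :
    gp 𝒜 P a = 0 := by rw [gp_apply_of_mem 𝒜 ha, if_neg h]

omit [CharP k 2] in
lemma gp_stay {P : ℕ → Prop} [DecidablePred P] {i : ℕ} {a : A} (ha : a ∈ 𝒜 i) :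
    gp 𝒜 P a ∈ 𝒜 i := by
  rw [gp_apply_of_mem 𝒜 ha]; split_ifs <;> simp [ha]

/-- even part projection -/
noncomputable def pE : A →ₗ[k] A := gp 𝒜 Even

/-- odd part projection -/
noncomputable def pO : A →ₗ[k] A := gp 𝒜 Odd

omit [CharP k 2] in
lemma pE_of_even {i : ℕ} {a : A} (ha : a ∈ 𝒜 i) (h : Even i) : pE 𝒜 a = a := gp_mem 𝒜 ha h
omit [CharP k 2] in
lemma pE_of_odd {i : ℕ} {a : A} (ha : a ∈ 𝒜 i) (h : Odd i) : pE 𝒜 a = 0 :=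
  gp_not_mem 𝒜 ha (by simpa [← Nat.not_even_iff_odd] using h)
omit [CharP k 2] in
lemma pO_of_even {i : ℕ} {a : A} (ha : a ∈ 𝒜 i) (h : Even i) : pO 𝒜 a = 0 :=
  gp_not_mem 𝒜 ha (by simpa [Nat.not_odd_iff_even] using h)
omit [CharP k 2] in
lemma pO_of_odd {i : ℕ} {a : A} (ha : a ∈ 𝒜 i) (h : Odd i) : pO 𝒜 a = a := gp_mem 𝒜 ha h

omit [CharP k 2] in
lemma pE_add_pO (a : A) : pE 𝒜 a + pO 𝒜 a = a := by
  refine DirectSum.Decomposition.inductionOn 𝒜 (motive := fun a => pE 𝒜 a + pO 𝒜 a = a) ?_ ?_ ?_ a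
  · simp
  · intro i m
    rcases Nat.even_or_odd i with h | h
    · rw [pE_of_even 𝒜 m.2 h, pO_of_even 𝒜 m.2 h, add_zero]
    · rw [pE_of_odd 𝒜 m.2 h, pO_of_odd 𝒜 m.2 h, zero_add]
  · intro u v hu hv
    rw [map_add, map_add]
    calc pE 𝒜 u + pE 𝒜 v + (pO 𝒜 u + pO 𝒜 v)
        = (pE 𝒜 u + pO 𝒜 u) + (pE 𝒜 v + pO 𝒜 v) := by ring
      _ = u + v := by rw [hu, hv]

omit [CharP k 2] in
lemma pO_one : pO 𝒜 (1 : A) = 0 :=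
  pO_of_even 𝒜 (SetLike.one_mem_graded 𝒜) (by simp)

omit [CharP k 2] in
lemma pE_one : pE 𝒜 (1 : A) = 1 :=
  pE_of_even 𝒜 (SetLike.one_mem_graded 𝒜) (by simp)

omit [CharP k 2] in
lemma pO_mul_core {i j : ℕ} {a b : A} (ha : a ∈ 𝒜 i) (hb : b ∈ 𝒜 j) :
    pO 𝒜 (a * b) = pO 𝒜 a * pE 𝒜 b + pE 𝒜 a * pO 𝒜 b := by
  have hab : a * b ∈ 𝒜 (i + j) := SetLike.mul_mem_graded ha hb
  rcases Nat.even_or_odd i with hi | hi <;> rcases Nat.even_or_odd j with hj | hj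
  · rw [pO_of_even 𝒜 hab (hi.add hj), pO_of_even 𝒜 ha hi, pO_of_even 𝒜 hb hj]; ring
  · rw [pO_of_odd 𝒜 hab (hi.add_odd hj), pO_of_even 𝒜 ha hi, pO_of_odd 𝒜 hb hj,
      pE_of_even 𝒜 ha hi]; ring
  · rw [pO_of_odd 𝒜 hab (hi.add_even hj), pO_of_odd 𝒜 ha hi, pO_of_even 𝒜 hb hj,
      pE_of_even 𝒜 hb hj]; ring
  · rw [pO_of_even 𝒜 hab (hi.add_odd hj), pO_of_odd 𝒜 ha hi, pO_of_odd 𝒜 hb hj,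
      pE_of_odd 𝒜 ha hi, pE_of_odd 𝒜 hb hj]; ring

omit [CharP k 2] in
lemma pE_mul_core {i j : ℕ} {a b : A} (ha : a ∈ 𝒜 i) (hb : b ∈ 𝒜 j) :
    pE 𝒜 (a * b) = pE 𝒜 a * pE 𝒜 b + pO 𝒜 a * pO 𝒜 b := by
  have hab : a * b ∈ 𝒜 (i + j) := SetLike.mul_mem_graded ha hb
  rcases Nat.even_or_odd i with hi | hi <;> rcases Nat.even_or_odd j with hj | hj
  · rw [pE_of_even 𝒜 hab (hi.add hj), pE_of_even 𝒜 ha hi, pE_of_even 𝒜 hb hj,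
      pO_of_even 𝒜 ha hi]; ring
  · rw [pE_of_odd 𝒜 hab (hi.add_odd hj), pE_of_odd 𝒜 hb hj, pO_of_even 𝒜 ha hi]; ring
  · rw [pE_of_odd 𝒜 hab (hi.add_even hj), pE_of_odd 𝒜 ha hi, pO_of_even 𝒜 hb hj]; ring
  · rw [pE_of_even 𝒜 hab (hi.add_odd hj), pE_of_odd 𝒜 ha hi, pO_of_odd 𝒜 ha hi,
      pO_of_odd 𝒜 hb hj]; ring

omit [CharP k 2] in
lemma pO_mul (a b : A) : pO 𝒜 (a * b) = pO 𝒜 a * pE 𝒜 b + pE 𝒜 a * pO 𝒜 b := by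
  refine DirectSum.Decomposition.inductionOn 𝒜
    (motive := fun a => ∀ b, pO 𝒜 (a * b) = pO 𝒜 a * pE 𝒜 b + pE 𝒜 a * pO 𝒜 b) ?_ ?_ ?_ a b
  · intro b; simp
  · intro i m b
    refine DirectSum.Decomposition.inductionOn 𝒜
      (motive := fun b => pO 𝒜 ((m : A) * b) = pO 𝒜 (m : A) * pE 𝒜 b + pE 𝒜 (m : A) * pO 𝒜 b)
      ?_ ?_ ?_ b
    · simp
    · intro j m' ; exact pO_mul_core 𝒜 m.2 m'.2
    · intro u v hu hv
      rw [mul_add, map_add, hu, hv, map_add, map_add]; ring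
  · intro u v hu hv b
    rw [add_mul, map_add, hu, hv, map_add, map_add]; ring

omit [CharP k 2] in
lemma pE_mul (a b : A) : pE 𝒜 (a * b) = pE 𝒜 a * pE 𝒜 b + pO 𝒜 a * pO 𝒜 b := by
  refine DirectSum.Decomposition.inductionOn 𝒜
    (motive := fun a => ∀ b, pE 𝒜 (a * b) = pE 𝒜 a * pE 𝒜 b + pO 𝒜 a * pO 𝒜 b) ?_ ?_ ?_ a b
  · intro b; simp
  · intro i m b
    refine DirectSum.Decomposition.inductionOn 𝒜
      (motive := fun b => pE 𝒜 ((m : A) * b) = pE 𝒜 (m : A) * pE 𝒜 b + pO 𝒜 (m : A) * pO 𝒜 b)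
      ?_ ?_ ?_ b
    · simp
    · intro j m' ; exact pE_mul_core 𝒜 m.2 m'.2
    · intro u v hu hv
      rw [mul_add, map_add, hu, hv, map_add, map_add]; ring
  · intro u v hu hv b
    rw [add_mul, map_add, hu, hv, map_add, map_add]; ring

end Graded

end OddPrimAux

namespace OddPrimAux

section Tensor

variable {k : Type*} [Field k] [CharP k 2] {A : Type*} [CommRing A] [Algebra k A]
variable (𝒜 : ℕ → Submodule k A) [GradedAlgebra 𝒜]

/-- multiplication map -/
noncomputable def muA (k A : Type*) [Field k] [CommRing A] [Algebra k A] :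
    A ⊗[k] A →ₗ[k] A := LinearMap.mul' k A

omit [CharP k 2] in
lemma muA_tmul (a b : A) : muA k A (a ⊗ₜ[k] b) = a * b := LinearMap.mul'_apply

/-- odd-first-component multiplication -/
noncomputable def mO : A ⊗[k] A →ₗ[k] A :=
  (muA k A).comp (TensorProduct.map (pO 𝒜) LinearMap.id)

/-- even-first-component multiplication -/
noncomputable def mE : A ⊗[k] A →ₗ[k] A :=
  (muA k A).comp (TensorProduct.map (pE 𝒜) LinearMap.id)

omit [CharP k 2] in
lemma mO_tmul (a b : A) : mO 𝒜 (a ⊗ₜ[k] b) = pO 𝒜 a * b := by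
  simp [mO, muA]

omit [CharP k 2] in
lemma mE_tmul (a b : A) : mE 𝒜 (a ⊗ₜ[k] b) = pE 𝒜 a * b := by
  simp [mE, muA]

omit [CharP k 2] in
lemma mO_add_mE (u : A ⊗[k] A) : mO 𝒜 u + mE 𝒜 u = muA k A u := by
  induction u with
  | zero => simp
  | tmul a b => rw [mO_tmul, mE_tmul, muA_tmul, ← add_mul, add_comm (pO 𝒜 a), pE_add_pO]
  | add u v hu hv =>
      rw [map_add, map_add, map_add, ← hu, ← hv]; ring

omit [CharP k 2] in
lemma mO_mul (u v : A ⊗[k] A) : mO 𝒜 (u * v) = mO 𝒜 u * mE 𝒜 v + mE 𝒜 u * mO 𝒜 v := by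
  induction u with
  | zero => simp
  | tmul a b =>
      induction v with
      | zero => simp
      | tmul c d =>
          rw [Algebra.TensorProduct.tmul_mul_tmul, mO_tmul, mO_tmul, mE_tmul, mE_tmul, mO_tmul,
            pO_mul 𝒜 a c]
          ring
      | add u' v' hu hv =>
          rw [mul_add, map_add, hu, hv, map_add, map_add]; ring
  | add u' v' hu hv =>
      rw [add_mul, map_add, hu, hv, map_add, map_add]; ring

omit [CharP k 2] in
lemma mE_mul (u v : A ⊗[k] A) : mE 𝒜 (u * v) = mE 𝒜 u * mE 𝒜 v + mO 𝒜 u * mO 𝒜 v := by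
  induction u with
  | zero => simp
  | tmul a b =>
      induction v with
      | zero => simp
      | tmul c d =>
          rw [Algebra.TensorProduct.tmul_mul_tmul, mE_tmul, mE_tmul, mE_tmul, mO_tmul, mO_tmul,
            pE_mul 𝒜 a c]
          ring
      | add u' v' hu hv =>
          rw [mul_add, map_add, hu, hv, map_add, map_add]; ring
  | add u' v' hu hv =>
      rw [add_mul, map_add, hu, hv, map_add, map_add]; ring

/-- the span of graded pieces of `A ⊗ A` in total degree `m` -/
noncomputable def SUP (m : ℕ) : Submodule k (A ⊗[k] A) :=
  ⨆ p : {p : ℕ × ℕ // p.1 + p.2 = m}, Submodule.map₂ (TensorProduct.mk k A A)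
    (𝒜 p.1.1) (𝒜 p.1.2)

/-- bigraded projection -/
noncomputable def Qd (p q : ℕ) : A ⊗[k] A →ₗ[k] A ⊗[k] A :=
  TensorProduct.map (gp 𝒜 (· = p)) (gp 𝒜 (· = q))

omit [CharP k 2] in
lemma sup_decomp {m : ℕ} {u : A ⊗[k] A} (hu : u ∈ SUP 𝒜 m) :
    ∑ p ∈ Finset.range (m + 1), Qd 𝒜 p (m - p) u = u := by
  have hle : SUP 𝒜 m ≤ LinearMap.eqLocus
      (∑ p ∈ Finset.range (m + 1), Qd 𝒜 p (m - p)) LinearMap.id := by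
    refine iSup_le ?_
    rintro ⟨⟨p₀, q₀⟩, hpq⟩
    refine Submodule.map₂_le.2 fun a ha b hb => ?_
    rw [LinearMap.mem_eqLocus]
    have : (∑ p ∈ Finset.range (m + 1), Qd 𝒜 p (m - p)) (a ⊗ₜ[k] b) = a ⊗ₜ[k] b := by
      rw [LinearMap.sum_apply]
      rw [Finset.sum_eq_single p₀]
      · simp only [Qd, TensorProduct.map_tmul]
        rw [gp_mem (P := (· = p₀)) 𝒜 ha rfl, gp_mem (P := (· = m - p₀)) 𝒜 hb
          (by omega : q₀ = m - p₀)]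
      · intro p hp hne
        simp only [Qd, TensorProduct.map_tmul]
        rw [gp_not_mem (P := (· = p)) 𝒜 ha (by omega : ¬ p₀ = p), TensorProduct.zero_tmul]
      · intro hmem
        exact absurd (Finset.mem_range.2 (by omega : p₀ < m + 1)) hmem
    simpa [TensorProduct.mk_apply] using this
  have := hle hu
  rw [LinearMap.mem_eqLocus] at this
  simpa using this

omit [CharP k 2] in
lemma gp_single_mem (p : ℕ) (a : A) : gp 𝒜 (· = p) a ∈ 𝒜 p := by
  refine DirectSum.Decomposition.inductionOn 𝒜 (motive := fun a => gp 𝒜 (· = p) a ∈ 𝒜 p) ?_ ?_ ?_ a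
  · simp
  · intro i m
    by_cases h : i = p
    · rw [gp_mem (P := (· = p)) 𝒜 m.2 h]; exact h ▸ m.2
    · rw [gp_not_mem (P := (· = p)) 𝒜 m.2 h]; simp
  · intro u v hu hv; rw [map_add]; exact add_mem hu hv

omit [CharP k 2] in
lemma Qd_mem_map₂ (p q : ℕ) (u : A ⊗[k] A) :
    Qd 𝒜 p q u ∈ Submodule.map₂ (TensorProduct.mk k A A) (𝒜 p) (𝒜 q) := by
  induction u with
  | zero => simp
  | tmul a b =>
      exact Submodule.apply_mem_map₂ _ (gp_single_mem 𝒜 p a) (gp_single_mem 𝒜 q b)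
  | add u v hu hv => rw [map_add]; exact add_mem hu hv

omit [CharP k 2] in
lemma muA_comm (u : A ⊗[k] A) : muA k A ((TensorProduct.comm k A A) u) = muA k A u := by
  induction u with
  | zero => simp
  | tmul a b => rw [TensorProduct.comm_tmul, muA_tmul, muA_tmul, mul_comm]
  | add u v hu hv => rw [map_add, map_add, map_add, hu, hv]

omit [CharP k 2] in
lemma comm_Qd (p q : ℕ) (u : A ⊗[k] A) :
    (TensorProduct.comm k A A) (Qd 𝒜 p q u) = Qd 𝒜 q p ((TensorProduct.comm k A A) u) := by
  induction u with
  | zero => simp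
  | tmul a b => simp [Qd, TensorProduct.comm_tmul]
  | add u v hu hv => rw [map_add, map_add, map_add, map_add, hu, hv]

omit [CharP k 2] in
lemma muA_Qd_swap {p q : ℕ} {u : A ⊗[k] A} (hu : (TensorProduct.comm k A A) u = u) :
    muA k A (Qd 𝒜 p q u) = muA k A (Qd 𝒜 q p u) := by
  conv_lhs => rw [← muA_comm (Qd 𝒜 p q u), comm_Qd, hu]

end Tensor

end OddPrimAux

namespace OddPrimAux

section Diag

variable {k : Type*} [Field k] [CharP k 2] {A : Type*} [CommRing A] [Algebra k A]
variable (𝒜 : ℕ → Submodule k A) [GradedAlgebra 𝒜]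

/-- projection onto the degree `p` component, valued in the submodule -/
noncomputable def cpj (p : ℕ) : A →ₗ[k] 𝒜 p :=
  (DirectSum.component k ℕ (fun i => 𝒜 i) p).comp
    (DirectSum.decomposeLinearEquiv 𝒜).toLinearMap

omit [CharP k 2] in
lemma subtype_cpj (p : ℕ) (a : A) : ((cpj 𝒜 p a : A)) = gp 𝒜 (· = p) a := by
  refine DirectSum.Decomposition.inductionOn 𝒜
    (motive := fun a => ((cpj 𝒜 p a : A)) = gp 𝒜 (· = p) a) ?_ ?_ ?_ a
  · simp
  · intro i m
    have hdec : (DirectSum.decompose 𝒜 (m : A) : DirectSum ℕ fun i => 𝒜 i)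
        = DirectSum.of (fun i => 𝒜 i) i m := DirectSum.decompose_coe 𝒜 m
    simp only [cpj, LinearMap.comp_apply, LinearEquiv.coe_coe,
      DirectSum.decomposeLinearEquiv_apply, hdec]
    by_cases h : i = p
    · subst h
      rw [gp_mem (P := (· = i)) 𝒜 m.2 rfl, ← DirectSum.lof_eq_of k,
        DirectSum.component.of]
      simp
    · rw [gp_not_mem (P := (· = p)) 𝒜 m.2 h, ← DirectSum.lof_eq_of k,
        DirectSum.component.of]
      simp [h]
  · intro u v hu hv
    rw [map_add, map_add, Submodule.coe_add, hu, hv]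

/-- bigraded diagonal projection valued upstairs -/
noncomputable def Qup (s : ℕ) : A ⊗[k] A →ₗ[k] (𝒜 s) ⊗[k] (𝒜 s) :=
  TensorProduct.map (cpj 𝒜 s) (cpj 𝒜 s)

omit [CharP k 2] in
lemma Qup_comm (s : ℕ) (u : A ⊗[k] A) :
    (TensorProduct.comm k (𝒜 s) (𝒜 s)) (Qup 𝒜 s u)
      = Qup 𝒜 s ((TensorProduct.comm k A A) u) := by
  induction u with
  | zero => simp
  | tmul a b => simp [Qup, TensorProduct.comm_tmul]
  | add u v hu hv => rw [map_add, map_add, map_add, map_add, hu, hv]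

omit [CharP k 2] in
lemma subsub_Qup (s : ℕ) (u : A ⊗[k] A) :
    (TensorProduct.map (𝒜 s).subtype (𝒜 s).subtype) (Qup 𝒜 s u) = Qd 𝒜 s s u := by
  induction u with
  | zero => simp
  | tmul a b => simp [Qup, Qd, TensorProduct.map_tmul, subtype_cpj]
  | add u v hu hv => rw [map_add, map_add, map_add, hu, hv]

/-- span of `2^K`-th powers of homogeneous elements of degree `t` -/
noncomputable def SqS (t K : ℕ) : Submodule k A :=
  Submodule.span k {y : A | ∃ w ∈ 𝒜 t, y = w ^ (2 ^ K)}

lemma diag_lemma (s : ℕ) (v : (𝒜 s) ⊗[k] (𝒜 s))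
    (hv : (TensorProduct.comm k (𝒜 s) (𝒜 s)) v = v) :
    muA k A ((TensorProduct.map (𝒜 s).subtype (𝒜 s).subtype) v) ∈ SqS 𝒜 s 1 := by
  classical
  set b := Module.Basis.ofVectorSpace k (𝒜 s) with hb
  set B2 := b.tensorProduct b with hB2
  -- symmetry of the coefficients
  have hmap : (B2.repr.toLinearMap.comp (TensorProduct.comm k (𝒜 s) (𝒜 s)).toLinearMap)
      = (Finsupp.lmapDomain k k (Prod.swap)).comp B2.repr.toLinearMap := by
    refine B2.ext ?_
    rintro ⟨i, j⟩
    simp only [LinearMap.comp_apply, LinearEquiv.coe_toLinearMap]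
    have hcomm : (TensorProduct.comm k (𝒜 s) (𝒜 s)) (B2 (i, j)) = B2 (j, i) := by
      rw [hB2, Module.Basis.tensorProduct_apply, Module.Basis.tensorProduct_apply,
        TensorProduct.comm_tmul]
    rw [hcomm, Module.Basis.repr_self, Module.Basis.repr_self, Finsupp.lmapDomain_apply,
      Finsupp.mapDomain_single]
    rfl
  have h0 : B2.repr v = Finsupp.mapDomain Prod.swap (B2.repr v) := by
    have h0 := congrArg (fun f => f v) hmap
    simp only [LinearMap.comp_apply, LinearEquiv.coe_toLinearMap, hv,
      Finsupp.lmapDomain_apply] at h0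
    exact h0
  have hcsym : ∀ pq : _ × _, B2.repr v (pq.2, pq.1) = B2.repr v pq := by
    intro pq
    conv_lhs => rw [h0]
    have := Finsupp.mapDomain_apply (Prod.swap_injective) (B2.repr v) pq
    exact this
  -- expand v in the basis
  set c := B2.repr v with hc
  have hv2 : ((muA k A) ((TensorProduct.map (𝒜 s).subtype (𝒜 s).subtype) v))
      = ∑ p ∈ c.support, c p • (((b p.1 : A)) * ((b p.2 : A))) := by
    conv_lhs => rw [← B2.linearCombination_repr v]
    rw [Finsupp.linearCombination_apply, Finsupp.sum, map_sum, map_sum]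
    refine Finset.sum_congr rfl fun p hp => ?_
    rw [map_smul, map_smul, hB2, Module.Basis.tensorProduct_apply', TensorProduct.map_tmul,
      muA_tmul]
    rfl
  rw [hv2, ← Finset.sum_filter_add_sum_filter_not c.support (fun p => p.1 = p.2)]
  have hoff : ∑ p ∈ c.support.filter (fun p => ¬ p.1 = p.2),
      c p • (((b p.1 : A)) * ((b p.2 : A))) = 0 := by
    refine Finset.sum_involution (fun p _ => Prod.swap p) ?_ ?_ ?_ ?_
    · intro p hp
      have h1 : c p.swap = c p := hcsym p
      have h2 : ((b p.swap.1 : A)) * ((b p.swap.2 : A)) = ((b p.1 : A)) * ((b p.2 : A)) := by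
        simp [Prod.swap, mul_comm]
      rw [h1, h2]
      exact addself k _
    · intro p hp _
      intro hsw
      have : p.1 = p.2 := by
        have := congrArg Prod.fst hsw
        simpa [Prod.swap] using this.symm
      simp only [Finset.mem_filter] at hp
      exact hp.2 this
    · intro p hp
      simp only [Finset.mem_filter, Finsupp.mem_support_iff] at hp ⊢
      refine ⟨by rw [show p.swap = (p.2, p.1) from rfl, hcsym p]; exact hp.1, ?_⟩
      intro h; exact hp.2 (by simpa [Prod.swap] using h.symm)
    · intro p hp; simp
  rw [hoff, add_zero]
  refine Submodule.sum_mem _ fun p hp => ?_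
  simp only [Finset.mem_filter] at hp
  refine Submodule.smul_mem _ _ (Submodule.subset_span ?_)
  refine ⟨(b p.1 : A), (b p.1).2, ?_⟩
  have : (b p.2 : A) = (b p.1 : A) := by rw [← hp.2]
  rw [this]
  norm_num
  ring

end Diag

end OddPrimAux

namespace OddPrimAux

section Sigma

variable {k : Type*} [Field k] [CharP k 2] {A : Type*} [CommRing A] [Algebra k A]
variable (𝒜 : ℕ → Submodule k A) [GradedAlgebra 𝒜]

lemma muA_sup_odd {m : ℕ} (hm : Odd m) {u : A ⊗[k] A} (hu : u ∈ SUP 𝒜 m)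
    (hsym : (TensorProduct.comm k A A) u = u) : muA k A u = 0 := by
  have hdec := sup_decomp 𝒜 hu
  have : muA k A u = ∑ p ∈ Finset.range (m + 1), muA k A (Qd 𝒜 p (m - p) u) := by
    rw [← map_sum, hdec]
  rw [this]
  refine Finset.sum_involution (fun p _ => m - p) ?_ ?_ ?_ ?_
  · intro p hp
    simp only [Finset.mem_range] at hp
    have h1 : m - (m - p) = p := by omega
    rw [h1, muA_Qd_swap 𝒜 hsym]
    exact addself k _
  · intro p hp _
    simp only [Finset.mem_range] at hp
    have := Nat.odd_iff.1 hm
    show m - p ≠ p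
    omega
  · intro p hp
    simp only [Finset.mem_range] at hp
    show m - p ∈ Finset.range (m + 1)
    simp only [Finset.mem_range]
    omega
  · intro p hp
    simp only [Finset.mem_range] at hp
    show m - (m - p) = p
    omega

lemma muA_sup_even (s : ℕ) {u : A ⊗[k] A} (hu : u ∈ SUP 𝒜 (2 * s))
    (hsym : (TensorProduct.comm k A A) u = u) : muA k A u ∈ SqS 𝒜 s 1 := by
  have hdec := sup_decomp 𝒜 hu
  have h1 : muA k A u = ∑ p ∈ Finset.range (2 * s + 1), muA k A (Qd 𝒜 p (2 * s - p) u) := by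
    rw [← map_sum, hdec]
  have hsmem : s ∈ Finset.range (2 * s + 1) := Finset.mem_range.2 (by omega)
  rw [h1, ← Finset.add_sum_erase _ _ hsmem]
  have herase : ∑ p ∈ (Finset.range (2 * s + 1)).erase s, muA k A (Qd 𝒜 p (2 * s - p) u)
      = 0 := by
    refine Finset.sum_involution (fun p _ => 2 * s - p) ?_ ?_ ?_ ?_
    · intro p hp
      simp only [Finset.mem_erase, Finset.mem_range] at hp
      have h2 : 2 * s - (2 * s - p) = p := by omega
      rw [h2, muA_Qd_swap 𝒜 hsym]
      exact addself k _
    · intro p hp _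
      simp only [Finset.mem_erase, Finset.mem_range] at hp
      show 2 * s - p ≠ p
      omega
    · intro p hp
      simp only [Finset.mem_erase, Finset.mem_range] at hp
      show 2 * s - p ∈ (Finset.range (2 * s + 1)).erase s
      simp only [Finset.mem_erase, Finset.mem_range]
      omega
    · intro p hp
      simp only [Finset.mem_erase, Finset.mem_range] at hp
      show 2 * s - (2 * s - p) = p
      omega
  rw [herase, add_zero]
  have h2 : 2 * s - s = s := by omega
  rw [h2, ← subsub_Qup 𝒜 s u]
  refine diag_lemma 𝒜 s _ ?_
  rw [Qup_comm, hsym]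

end Sigma

section PhiPsi

variable {k : Type*} [Field k] [CharP k 2] {A : Type*} [CommRing A] [Algebra k A]
variable (𝒜 : ℕ → Submodule k A) [GradedAlgebra 𝒜]
variable (Δ : A →ₐ[k] TensorProduct k A A)

noncomputable def Phi : A →ₗ[k] A := (mO 𝒜).comp Δ.toLinearMap
noncomputable def Psi : A →ₗ[k] A := (mE 𝒜).comp Δ.toLinearMap

omit [CharP k 2] in
lemma Phi_mul (a b : A) :
    Phi 𝒜 Δ (a * b) = Phi 𝒜 Δ a * Psi 𝒜 Δ b + Psi 𝒜 Δ a * Phi 𝒜 Δ b := by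
  simp only [Phi, Psi, LinearMap.comp_apply, AlgHom.toLinearMap_apply, map_mul]
  exact mO_mul 𝒜 _ _

omit [CharP k 2] in
lemma Psi_mul (a b : A) :
    Psi 𝒜 Δ (a * b) = Psi 𝒜 Δ a * Psi 𝒜 Δ b + Phi 𝒜 Δ a * Phi 𝒜 Δ b := by
  simp only [Phi, Psi, LinearMap.comp_apply, AlgHom.toLinearMap_apply, map_mul]
  exact mE_mul 𝒜 _ _

omit [CharP k 2] in
lemma Phi_add_Psi (y : A) : Phi 𝒜 Δ y + Psi 𝒜 Δ y = muA k A (Δ y) :=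
  mO_add_mE 𝒜 (Δ y)

/-- `Δ` is graded -/
def IsGr : Prop := ∀ m, ∀ y ∈ 𝒜 m, Δ y ∈ SUP 𝒜 m
/-- cocommutativity -/
def IsCo (Δ' : A →ₐ[k] TensorProduct k A A) : Prop :=
  ∀ y : A, (TensorProduct.comm k A A) (Δ' y) = Δ' y

lemma sigma_odd (hgr : IsGr 𝒜 Δ) (hco : IsCo Δ) {m : ℕ} {y : A} (hm : Odd m)
    (hy : y ∈ 𝒜 m) : muA k A (Δ y) = 0 :=
  muA_sup_odd 𝒜 hm (hgr m y hy) (hco y)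

lemma sigma_even (hgr : IsGr 𝒜 Δ) (hco : IsCo Δ) {s : ℕ} {y : A}
    (hy : y ∈ 𝒜 (2 * s)) : muA k A (Δ y) ∈ SqS 𝒜 s 1 :=
  muA_sup_even 𝒜 s (hgr (2 * s) y hy) (hco y)

lemma Psi_eq_Phi_odd (hgr : IsGr 𝒜 Δ) (hco : IsCo Δ) {c : ℕ} {a : A} (hc : Odd c)
    (ha : a ∈ 𝒜 c) : Psi 𝒜 Δ a = Phi 𝒜 Δ a := by
  have h := Phi_add_Psi 𝒜 Δ a
  rw [sigma_odd 𝒜 Δ hgr hco hc ha] at h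
  exact (eq_of_add_eq_zero'' k (by linear_combination h)).symm

omit [CharP k 2] in
lemma Phi_deg (hgr : IsGr 𝒜 Δ) {c : ℕ} {a : A} (ha : a ∈ 𝒜 c) : Phi 𝒜 Δ a ∈ 𝒜 c := by
  have hu := hgr c a ha
  have hle : SUP 𝒜 c ≤ Submodule.comap (mO 𝒜) (𝒜 c) := by
    refine iSup_le ?_
    rintro ⟨⟨p, q⟩, hpq⟩
    refine Submodule.map₂_le.2 fun w hw z hz => ?_
    have : mO 𝒜 (w ⊗ₜ[k] z) ∈ 𝒜 c := by
      rw [mO_tmul]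
      have h1 : pO 𝒜 w ∈ 𝒜 p := gp_stay 𝒜 hw
      have := SetLike.mul_mem_graded h1 hz
      simpa [hpq] using this
    simpa [TensorProduct.mk_apply] using this
  exact hle hu

lemma Phi_sq (y : A) : Phi 𝒜 Δ (y * y) = 0 := by
  rw [Phi_mul, mul_comm (Psi 𝒜 Δ y)]
  exact addself k _

lemma Psi_sq (y : A) : Psi 𝒜 Δ (y * y) = (muA k A (Δ y)) ^ 2 := by
  rw [Psi_mul, ← Phi_add_Psi 𝒜 Δ y]
  have h2 : (2 : A) = 0 := twoA_eq_zero k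
  linear_combination (-(Phi 𝒜 Δ y * Psi 𝒜 Δ y)) * h2

lemma Phi_pow (w : A) : ∀ K, 1 ≤ K → Phi 𝒜 Δ (w ^ (2 ^ K)) = 0 := by
  intro K hK
  have he : K - 1 + 1 = K := by omega
  have h1 : w ^ (2 ^ K) = w ^ (2 ^ (K - 1)) * w ^ (2 ^ (K - 1)) := by
    rw [← pow_add]
    congr 1
    have h3 : 2 ^ (K - 1) + 2 ^ (K - 1) = 2 ^ (K - 1) * 2 := by ring
    rw [h3, ← pow_succ, he]
  rw [h1, Phi_sq]

lemma Psi_pow (w : A) : ∀ K, 1 ≤ K → Psi 𝒜 Δ (w ^ (2 ^ K)) = (muA k A (Δ w)) ^ (2 ^ K) := by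
  intro K
  induction K with
  | zero => omega
  | succ K ih =>
      intro _
      by_cases hK : 1 ≤ K
      · have h1 : w ^ (2 ^ (K + 1)) = w ^ (2 ^ K) * w ^ (2 ^ K) := by
          rw [← pow_add, pow_succ]; ring_nf
        rw [h1, Psi_mul, ih hK, Phi_pow 𝒜 Δ w K hK]
        rw [← pow_add, pow_succ]
        ring
      · have hK0 : K = 0 := by omega
        subst hK0
        have h1 : w ^ (2 ^ 1) = w * w := by ring
        rw [h1, Psi_sq]
        norm_num

end PhiPsi

section SqSfacts

variable {k : Type*} [Field k] [CharP k 2] {A : Type*} [CommRing A] [Algebra k A]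
variable (𝒜 : ℕ → Submodule k A) [GradedAlgebra 𝒜]

lemma SqS_sq {s K : ℕ} {y : A} (hy : y ∈ SqS 𝒜 s K) : y ^ 2 ∈ SqS 𝒜 s (K + 1) := by
  induction hy using Submodule.span_induction with
  | mem z hz =>
      obtain ⟨w, hw, rfl⟩ := hz
      refine Submodule.subset_span ⟨w, hw, ?_⟩
      rw [← pow_mul, pow_succ]
  | zero => simpa using (SqS 𝒜 s (K + 1)).zero_mem
  | add u v hu hv hu' hv' =>
      have h2 : (2 : A) = 0 := twoA_eq_zero k
      have : (u + v) ^ 2 = u ^ 2 + v ^ 2 := by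
        rw [add_sq, h2]; ring
      rw [this]
      exact add_mem hu' hv'
  | smul c u hu hu' =>
      rw [smul_pow]
      exact Submodule.smul_mem _ _ hu'

lemma SqS_pow {s : ℕ} {y : A} (hy : y ∈ SqS 𝒜 s 1) (K : ℕ) : y ^ (2 ^ K) ∈ SqS 𝒜 s (K + 1) := by
  induction K with
  | zero => simpa using hy
  | succ K ih =>
      have h1 : y ^ (2 ^ (K + 1)) = (y ^ (2 ^ K)) ^ 2 := by
        rw [← pow_mul, pow_succ]
      rw [h1]
      exact SqS_sq 𝒜 ih

end SqSfacts

end OddPrimAux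

namespace OddPrimAux

section Main

variable {k : Type*} [Field k] [CharP k 2] {A : Type*} [CommRing A] [Algebra k A]
variable (𝒜 : ℕ → Submodule k A) [GradedAlgebra 𝒜]
variable (Δ : A →ₐ[k] TensorProduct k A A)

/-- homogeneous decomposables of degree n -/
noncomputable def DD (n : ℕ) : Submodule k A :=
  ⨆ (i : ℕ), ⨆ (j : ℕ), ⨆ (_ : 0 < i), ⨆ (_ : 0 < j), ⨆ (_ : i + j = n), 𝒜 i * 𝒜 j

/-- iterated square form submodules -/
noncomputable def TT (n K : ℕ) : Submodule k A :=
  ⨆ (c : ℕ), ⨆ (t : ℕ), ⨆ (_ : Odd c), ⨆ (_ : 1 ≤ t), ⨆ (_ : c + 2 ^ K * t = n),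
    𝒜 c * SqS 𝒜 t K

omit [CharP k 2] in
lemma mem_DD {n : ℕ} {x : A} (hx : x ∈ 𝒜 n)
    (hmem : x ∈ (⨆ i : {i : ℕ // 0 < i}, 𝒜 i) * (⨆ i : {i : ℕ // 0 < i}, 𝒜 i)) :
    x ∈ DD 𝒜 n := by
  have hJJ : (⨆ i : {i : ℕ // 0 < i}, 𝒜 i) * (⨆ i : {i : ℕ // 0 < i}, 𝒜 i)
      = ⨆ i : {i : ℕ // 0 < i}, ⨆ j : {j : ℕ // 0 < j}, 𝒜 i.1 * 𝒜 j.1 := by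
    rw [Submodule.iSup_mul]
    exact iSup_congr fun i => Submodule.mul_iSup _ _
  rw [hJJ] at hmem
  have hle : (⨆ i : {i : ℕ // 0 < i}, ⨆ j : {j : ℕ // 0 < j}, 𝒜 i.1 * 𝒜 j.1)
      ≤ Submodule.comap (gp 𝒜 (· = n)) (DD 𝒜 n) := by
    refine iSup_le fun i => iSup_le fun j => Submodule.mul_le.2 fun a ha b hb => ?_
    simp only [Submodule.mem_comap]
    have hab : a * b ∈ 𝒜 (i.1 + j.1) := SetLike.mul_mem_graded ha hb
    by_cases hij : i.1 + j.1 = n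
    · rw [gp_mem (P := (· = n)) 𝒜 hab hij]
      exact Submodule.mem_iSup_of_mem i.1 (Submodule.mem_iSup_of_mem j.1
        (Submodule.mem_iSup_of_mem i.2 (Submodule.mem_iSup_of_mem j.2
        (Submodule.mem_iSup_of_mem hij (Submodule.mul_mem_mul ha hb)))))
    · rw [gp_not_mem (P := (· = n)) 𝒜 hab hij]
      exact zero_mem _
  have := hle hmem
  simp only [Submodule.mem_comap] at this
  rwa [gp_mem (P := (· = n)) 𝒜 hx rfl] at this

lemma DD_le (hgr : IsGr 𝒜 Δ) (hco : IsCo Δ) {n : ℕ} (hn : Odd n) :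
    DD 𝒜 n ≤ Submodule.comap (Phi 𝒜 Δ) (TT 𝒜 n 1) := by
  refine iSup_le fun i => iSup_le fun j => iSup_le fun hi => iSup_le fun hj =>
    iSup_le fun hij => Submodule.mul_le.2 fun a ha b hb => ?_
  simp only [Submodule.mem_comap]
  have hnodd := Nat.odd_iff.1 hn
  rcases Nat.even_or_odd i with hie | hio
  · -- i even, j odd
    have hjo : Odd j := by
      rw [Nat.odd_iff]; rw [Nat.even_iff] at hie; omega
    obtain ⟨s, hs⟩ := hie
    have hi2 : i = 2 * s := by omega
    have hs1 : 1 ≤ s := by omega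
    have hPsib : Psi 𝒜 Δ b = Phi 𝒜 Δ b := Psi_eq_Phi_odd 𝒜 Δ hgr hco hjo hb
    have hcalc : Phi 𝒜 Δ (a * b) = Phi 𝒜 Δ b * muA k A (Δ a) := by
      rw [Phi_mul, hPsib, ← Phi_add_Psi 𝒜 Δ a]; ring
    rw [hcalc]
    have h1 : Phi 𝒜 Δ b ∈ 𝒜 j := Phi_deg 𝒜 Δ hgr hb
    have h2 : muA k A (Δ a) ∈ SqS 𝒜 s 1 := sigma_even 𝒜 Δ hgr hco (hi2 ▸ ha)
    exact Submodule.mem_iSup_of_mem j (Submodule.mem_iSup_of_mem s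
      (Submodule.mem_iSup_of_mem hjo (Submodule.mem_iSup_of_mem hs1
      (Submodule.mem_iSup_of_mem (by omega : j + 2 ^ 1 * s = n)
      (Submodule.mul_mem_mul h1 h2)))))
  · -- i odd, j even
    have hje : Even j := by
      rw [Nat.even_iff]; rw [Nat.odd_iff] at hio; omega
    obtain ⟨s, hs⟩ := hje
    have hj2 : j = 2 * s := by omega
    have hs1 : 1 ≤ s := by omega
    have hPsia : Psi 𝒜 Δ a = Phi 𝒜 Δ a := Psi_eq_Phi_odd 𝒜 Δ hgr hco hio ha
    have hcalc : Phi 𝒜 Δ (a * b) = Phi 𝒜 Δ a * muA k A (Δ b) := by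
      rw [Phi_mul, hPsia, ← Phi_add_Psi 𝒜 Δ b]; ring
    rw [hcalc]
    have h1 : Phi 𝒜 Δ a ∈ 𝒜 i := Phi_deg 𝒜 Δ hgr ha
    have h2 : muA k A (Δ b) ∈ SqS 𝒜 s 1 := sigma_even 𝒜 Δ hgr hco (hj2 ▸ hb)
    exact Submodule.mem_iSup_of_mem i (Submodule.mem_iSup_of_mem s
      (Submodule.mem_iSup_of_mem hio (Submodule.mem_iSup_of_mem hs1
      (Submodule.mem_iSup_of_mem (by omega : i + 2 ^ 1 * s = n)
      (Submodule.mul_mem_mul h1 h2)))))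

lemma TT_le (hgr : IsGr 𝒜 Δ) (hco : IsCo Δ) {n : ℕ} (K : ℕ) (hK : 1 ≤ K) :
    TT 𝒜 n K ≤ Submodule.comap (Phi 𝒜 Δ) (TT 𝒜 n (K + 1)) := by
  refine iSup_le fun c => iSup_le fun t => iSup_le fun hc => iSup_le fun ht =>
    iSup_le fun hct => Submodule.mul_le.2 fun h hh v hv => ?_
  simp only [Submodule.mem_comap]
  induction hv using Submodule.span_induction with
  | mem z hz =>
      obtain ⟨w, hw, rfl⟩ := hz
      have hΦW : Phi 𝒜 Δ (w ^ 2 ^ K) = 0 := Phi_pow 𝒜 Δ w K hK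
      have hΨW : Psi 𝒜 Δ (w ^ 2 ^ K) = (muA k A (Δ w)) ^ 2 ^ K := Psi_pow 𝒜 Δ w K hK
      have hcalc : Phi 𝒜 Δ (h * w ^ 2 ^ K) = Phi 𝒜 Δ h * (muA k A (Δ w)) ^ 2 ^ K := by
        rw [Phi_mul, hΦW, hΨW]; ring
      rw [hcalc]
      rcases Nat.even_or_odd t with hte | hto
      · obtain ⟨s, hs⟩ := hte
        have ht2 : t = 2 * s := by omega
        have hσ : muA k A (Δ w) ∈ SqS 𝒜 s 1 := sigma_even 𝒜 Δ hgr hco (ht2 ▸ hw)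
        have hpow : (muA k A (Δ w)) ^ 2 ^ K ∈ SqS 𝒜 s (K + 1) := SqS_pow 𝒜 hσ K
        have hdeg : c + 2 ^ (K + 1) * s = n := by
          have h3 : 2 ^ (K + 1) * s = 2 ^ K * t := by rw [ht2, pow_succ]; ring
          omega
        exact Submodule.mem_iSup_of_mem c (Submodule.mem_iSup_of_mem s
          (Submodule.mem_iSup_of_mem hc (Submodule.mem_iSup_of_mem (by omega : 1 ≤ s)
          (Submodule.mem_iSup_of_mem hdeg
          (Submodule.mul_mem_mul (Phi_deg 𝒜 Δ hgr hh) hpow)))))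
      · have hσ0 : muA k A (Δ w) = 0 := sigma_odd 𝒜 Δ hgr hco hto hw
        rw [hσ0, zero_pow (by positivity : (2:ℕ) ^ K ≠ 0), mul_zero]
        exact zero_mem _
  | zero =>
      rw [mul_zero, map_zero]; exact zero_mem _
  | add u v hu hv hu' hv' =>
      rw [mul_add, map_add]; exact add_mem hu' hv'
  | smul r u hu hu' =>
      rw [mul_smul_comm, map_smul]; exact Submodule.smul_mem _ _ hu'

omit [CharP k 2] in
lemma TT_bot {n K : ℕ} (hK : n < 2 ^ K) : TT 𝒜 n K = ⊥ := by
  refine le_bot_iff.1 (iSup_le fun c => iSup_le fun t => iSup_le fun hc =>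
    iSup_le fun ht => iSup_le fun hct => ?_)
  exfalso
  have hc1 : c % 2 = 1 := Nat.odd_iff.1 hc
  have h1 : 2 ^ K ≤ 2 ^ K * t := Nat.le_mul_of_pos_right _ (by omega)
  omega

end Main

end OddPrimAux

theorem odd_primitive_indecomposable_char_two
    (k : Type*) [Field k] [CharP k 2] (A : Type*) [CommRing A] [Algebra k A]
    (𝒜 : ℕ → Submodule k A) [GradedAlgebra 𝒜]
    -- connected: A⁰ = k
    (hconn : 𝒜 0 = Submodule.span k {(1 : A)})
    -- Hopf structure: comultiplication and counit
    (Δ : A →ₐ[k] TensorProduct k A A) (ε : A →ₐ[k] k)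
    (hcounit_l : ∀ x : A,
      (TensorProduct.lid k A) ((TensorProduct.map ε.toLinearMap LinearMap.id) (Δ x)) = x)
    (hcounit_r : ∀ x : A,
      (TensorProduct.rid k A) ((TensorProduct.map LinearMap.id ε.toLinearMap) (Δ x)) = x)
    -- the comultiplication is graded (preserves total degree)
    (hgraded : ∀ n, ∀ x ∈ 𝒜 n, Δ x ∈
      ⨆ p : {p : ℕ × ℕ // p.1 + p.2 = n}, Submodule.map₂ (TensorProduct.mk k A A)
        (𝒜 p.1.1) (𝒜 p.1.2))
    -- cocommutative
    (hcocomm : ∀ x : A, (TensorProduct.comm k A A) (Δ x) = Δ x)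
    -- a non-zero primitive element of odd degree
    (n : ℕ) (hn : Odd n) (x : A) (hx : x ∈ 𝒜 n) (hx0 : x ≠ 0)
    (hprim : Δ x = x ⊗ₜ[k] (1 : A) + (1 : A) ⊗ₜ[k] x) :
    x ∉ (⨆ i : {i : ℕ // 0 < i}, 𝒜 i) * (⨆ i : {i : ℕ // 0 < i}, 𝒜 i) := by
  intro hmem
  classical
  have hgr : OddPrimAux.IsGr 𝒜 Δ := hgraded
  have hco : OddPrimAux.IsCo Δ := hcocomm
  -- Phi fixes x
  have hΦx : OddPrimAux.Phi 𝒜 Δ x = x := by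
    simp only [OddPrimAux.Phi, LinearMap.comp_apply, AlgHom.toLinearMap_apply, hprim, map_add]
    rw [OddPrimAux.mO_tmul, OddPrimAux.mO_tmul, OddPrimAux.pO_of_odd 𝒜 hx hn,
      OddPrimAux.pO_one, mul_one, zero_mul, add_zero]
  -- x is in each TT K
  have hxD : x ∈ OddPrimAux.DD 𝒜 n := OddPrimAux.mem_DD 𝒜 hx hmem
  have hx1 : x ∈ OddPrimAux.TT 𝒜 n 1 := by
    have := OddPrimAux.DD_le 𝒜 Δ hgr hco hn hxD
    simp only [Submodule.mem_comap] at this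
    rwa [hΦx] at this
  have hxK : ∀ K, 1 ≤ K → x ∈ OddPrimAux.TT 𝒜 n K := by
    intro K hK
    induction K, hK using Nat.le_induction with
    | base => exact hx1
    | succ K hK ih =>
        have := OddPrimAux.TT_le 𝒜 Δ hgr hco K hK ih
        simp only [Submodule.mem_comap] at this
        rwa [hΦx] at this
  have hfin : x ∈ OddPrimAux.TT 𝒜 n (n + 1) := hxK (n + 1) (by omega)
  rw [OddPrimAux.TT_bot 𝒜 (by
    calc n < 2 ^ n := Nat.lt_two_pow_self (n := n)
      _ < 2 ^ (n + 1) := by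
          have := Nat.two_pow_pos n
          calc 2 ^ n < 2 ^ n + 2 ^ n := by omega
            _ = 2 ^ (n + 1) := by rw [pow_succ]; ring)] at hfin
  simp only [Submodule.mem_bot] at hfin
  exact hx0 hfin
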